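/- Let (𝒴,‖·‖_𝒴) be a normed real vector space whose norm dual space is (isometrically, as ordered spaces) an Archimedean Banach lattice (𝒳,⪯,‖·‖_𝒳). If the positive cone 𝒳₊ is weak*-closed (i.e. σ(𝒳,𝒴)-closed), then 𝒳 is Dedekind complete. -/

import Mathlib

open MeasureTheory Filter Topology

/-- Proposition (prop:onlyDC): if a normed space `𝒴` has an Archimedean Banach lattice `𝒳`
as its dual space and the positive cone of `𝒳` is weak*-closed, then `𝒳` is Dedekind
complete. -/
theorem dedekindComplete_of_weakStarClosed_cone
    {Y : Type*} [NormedAddCommGroup Y] [NormedSpace ℝ Y]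
    {X : Type*} [NormedAddCommGroup X] [Lattice X] [IsOrderedAddMonoid X] [HasSolidNorm X]
    [NormedSpace ℝ X] [PosSMulStrictMono ℝ X] [PosSMulReflectLT ℝ X]
    [CompleteSpace X]
    (harch : ∀ x y : X, 0 ≤ x → 0 ≤ y → (∀ n : ℕ, n • y ≤ x) → y = 0)
    (e : X ≃ₗᵢ[ℝ] StrongDual ℝ Y)
    (hcone : IsClosed {φ : WeakDual ℝ Y | 0 ≤ e.symm (WeakDual.toStrongDual φ)}) :
    ∀ S : Set X, S.Nonempty → BddAbove S → ∃ a : X, IsLUB S a := by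
  classical
  intro S hS hbdd
  obtain ⟨s0, hs0⟩ := hS
  obtain ⟨b, hb⟩ := hbdd
  -- the two half-space sets are weak*-closed
  have hclosed_ge : ∀ c : X,
      IsClosed {ψ : WeakDual ℝ Y | c ≤ e.symm (WeakDual.toStrongDual ψ)} := by
    intro c
    have hset : {ψ : WeakDual ℝ Y | c ≤ e.symm (WeakDual.toStrongDual ψ)} =
        (fun ψ : WeakDual ℝ Y => ψ - StrongDual.toWeakDual (e c)) ⁻¹'
          {φ : WeakDual ℝ Y | 0 ≤ e.symm (WeakDual.toStrongDual φ)} := by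
      ext ψ
      simp only [Set.mem_preimage, Set.mem_setOf_eq, map_sub]
      rw [show WeakDual.toStrongDual (StrongDual.toWeakDual (e c)) = e c from rfl,
        e.symm_apply_apply, sub_nonneg]
    rw [hset]
    exact hcone.preimage (continuous_id.sub continuous_const)
  have hclosed_le : ∀ u : X,
      IsClosed {ψ : WeakDual ℝ Y | e.symm (WeakDual.toStrongDual ψ) ≤ u} := by
    intro u
    have hset : {ψ : WeakDual ℝ Y | e.symm (WeakDual.toStrongDual ψ) ≤ u} =
        (fun ψ : WeakDual ℝ Y => StrongDual.toWeakDual (e u) - ψ) ⁻¹'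
          {φ : WeakDual ℝ Y | 0 ≤ e.symm (WeakDual.toStrongDual φ)} := by
      ext ψ
      simp only [Set.mem_preimage, Set.mem_setOf_eq, map_sub]
      rw [show WeakDual.toStrongDual (StrongDual.toWeakDual (e u)) = e u from rfl,
        e.symm_apply_apply, sub_nonneg]
    rw [hset]
    exact hcone.preimage (continuous_const.sub continuous_id)
  -- index type: sup-closure of S
  set T : Set X := supClosure S with hTdef
  have hT : SupClosed T := supClosed_supClosure
  letI : SemilatticeSup T := Subtype.semilatticeSup fun x y hx hy => hT hx hy
  haveI : Nonempty T := ⟨⟨s0, subset_supClosure hs0⟩⟩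
  have hbT : b ∈ upperBounds T := by
    rw [hTdef, upperBounds_supClosure]; exact hb
  -- the net
  set f : T → WeakDual ℝ Y :=
    fun p => StrongDual.toWeakDual (e ((p : X) ⊔ s0)) with hfdef
  set r : ℝ := ‖b ⊔ s0 - s0‖ + ‖s0‖ with hrdef
  set K : Set (WeakDual ℝ Y) := WeakDual.toStrongDual ⁻¹' Metric.closedBall 0 r with hKdef
  have hK : IsCompact K := WeakDual.isCompact_closedBall (𝕜 := ℝ) (E := Y) 0 r
  have hfK : ∀ p : T, f p ∈ K := by
    intro p
    have hps : s0 ≤ (p : X) ⊔ s0 := le_sup_right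
    have hpb : (p : X) ⊔ s0 ≤ b ⊔ s0 := sup_le_sup_right (hbT p.2) s0
    have h1 : ‖(p : X) ⊔ s0 - s0‖ ≤ ‖b ⊔ s0 - s0‖ := by
      have habs : |(p : X) ⊔ s0 - s0| ≤ |b ⊔ s0 - s0| := by
        rw [abs_of_nonneg (sub_nonneg.mpr hps),
          abs_of_nonneg (sub_nonneg.mpr (le_sup_right.trans hpb))]
        exact sub_le_sub_right hpb s0
      exact HasSolidNorm.solid habs
    have h2 : ‖(p : X) ⊔ s0‖ ≤ r := by
      calc ‖(p : X) ⊔ s0‖ = ‖(p : X) ⊔ s0 - s0 + s0‖ := congrArg norm (by abel)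
        _ ≤ ‖(p : X) ⊔ s0 - s0‖ + ‖s0‖ := norm_add_le _ _
        _ ≤ r := by rw [hrdef]; exact add_le_add_left h1 _
    have : WeakDual.toStrongDual (f p) = e ((p : X) ⊔ s0) := rfl
    simp only [hKdef, Set.mem_preimage, this, Metric.mem_closedBall, dist_zero_right]
    rw [e.norm_map]
    exact h2
  -- cluster point
  have hFK : Filter.map f atTop ≤ 𝓟 K := by
    rw [le_principal_iff, mem_map]
    exact Filter.univ_mem' hfK
  obtain ⟨φ, hφK, hφ⟩ := hK hFK
  refine ⟨e.symm (WeakDual.toStrongDual φ), ?_, ?_⟩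
  · -- upper bound
    intro s hs
    have hsT : s ∈ T := subset_supClosure hs
    have hmem : {ψ : WeakDual ℝ Y | s ≤ e.symm (WeakDual.toStrongDual ψ)} ∈ Filter.map f atTop := by
      rw [mem_map]
      refine mem_of_superset (Ici_mem_atTop (⟨s, hsT⟩ : T)) ?_
      intro p hp
      have : s ≤ (p : X) ⊔ s0 := le_trans hp le_sup_left
      simp only [Set.mem_preimage, Set.mem_setOf_eq]
      have h1 : WeakDual.toStrongDual (f p) = e ((p : X) ⊔ s0) := rfl
      rw [h1, e.symm_apply_apply]
      exact this
    have : φ ∈ closure {ψ : WeakDual ℝ Y | s ≤ e.symm (WeakDual.toStrongDual ψ)} :=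
      mem_closure_iff_clusterPt.mpr (hφ.mono (le_principal_iff.mpr hmem))
    exact (hclosed_ge s).closure_subset this
  · -- least
    intro u hu
    have hs0u : s0 ≤ u := hu hs0
    have hmem : {ψ : WeakDual ℝ Y | e.symm (WeakDual.toStrongDual ψ) ≤ u} ∈ Filter.map f atTop := by
      rw [mem_map]
      refine Filter.univ_mem' ?_
      intro p
      have hpu : (p : X) ≤ u := by
        have : u ∈ upperBounds T := by rw [hTdef, upperBounds_supClosure]; exact hu
        exact this p.2
      simp only [Set.mem_preimage, Set.mem_setOf_eq]
      have h1 : WeakDual.toStrongDual (f p) = e ((p : X) ⊔ s0) := rfl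
      rw [h1, e.symm_apply_apply]
      exact sup_le hpu hs0u
    have : φ ∈ closure {ψ : WeakDual ℝ Y | e.symm (WeakDual.toStrongDual ψ) ≤ u} :=
      mem_closure_iff_clusterPt.mpr (hφ.mono (le_principal_iff.mpr hmem))
    exact (hclosed_le u).closure_subset this
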